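/- Let P be a d×d orthogonal projection of rank r, and σ_1 ≥ ... ≥ σ_d ≥ 0 nonnegative reals with Σ the diagonal matrix of the σ_i. Then ||Σ - ΣP||_F^2 ≤ Σ_{i>r} σ_i^2 + Σ_{i>r} (σ_1^2 - σ_i^2) P_{ii}. -/

import Mathlib

open Matrix BigOperators

/-- Squared Frobenius norm of a real matrix. -/
noncomputable def frobSq {n d : ℕ} (A : Matrix (Fin n) (Fin d) ℝ) : ℝ :=
  ∑ i, ∑ j, (A i j) ^ 2

/-- Let `P` be a `d×d` orthogonal projection of rank `r` (i.e. `P² = P = Pᵀ`, `Tr P = r`),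
and let `Σ = diag(σ 0, ..., σ (d-1))` with `σ 0 ≥ σ 1 ≥ ... ≥ 0` (0-indexed, so `σ 0 = σ_1`
is the largest value). Then
`‖Σ - Σ P‖_F² ≤ ∑_{i > r} σ_i² + ∑_{i > r} (σ_1² - σ_i²) P_{ii}`,
where the sums (1-indexed `i > r`) range over 0-indexed positions `r ≤ i < d`. -/
theorem frob_proj_diag_bound {d r : ℕ} (P : Matrix (Fin d) (Fin d) ℝ)
    (hP : P * P = P) (hPsym : Pᵀ = P) (htr : Matrix.trace P = (r : ℝ))
    (σ : ℕ → ℝ) (hσdec : Antitone σ) (hσnonneg : ∀ i, 0 ≤ σ i) :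
    frobSq ((Matrix.diagonal fun i : Fin d => σ (i : ℕ)) -
        (Matrix.diagonal fun i : Fin d => σ (i : ℕ)) * P) ≤
      (∑ i ∈ Finset.univ.filter (fun i : Fin d => r ≤ (i : ℕ)), σ (i : ℕ) ^ 2) +
        ∑ i ∈ Finset.univ.filter (fun i : Fin d => r ≤ (i : ℕ)),
          (σ 0 ^ 2 - σ (i : ℕ) ^ 2) * P i i := by
  classical
  -- key: ∑ j, (P i j)^2 = P i i
  have hsq : ∀ i : Fin d, ∑ j, (P i j) ^ 2 = P i i := by
    intro i
    have h := congrFun (congrFun hP i) i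
    rw [Matrix.mul_apply] at h
    calc ∑ j, (P i j) ^ 2 = ∑ j, P i j * P j i := by
          refine Finset.sum_congr rfl fun j _ => ?_
          have h2 : P i j = P j i := congrFun (congrFun hPsym j) i
          rw [← h2]; ring
      _ = P i i := h
  have hP0 : ∀ i : Fin d, 0 ≤ P i i := fun i => by
    rw [← hsq i]; positivity
  have hP1 : ∀ i : Fin d, P i i ≤ 1 := by
    intro i
    have h1 : (P i i) ^ 2 ≤ P i i := by
      have hle := Finset.single_le_sum (f := fun j => (P i j) ^ 2)
        (fun j _ => sq_nonneg _) (Finset.mem_univ i)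
      rw [hsq i] at hle
      exact hle
    nlinarith [hP0 i]
  -- LHS = ∑ i, σ i ^ 2 * (1 - P i i)
  have hL : frobSq ((Matrix.diagonal fun i : Fin d => σ (i : ℕ)) -
        (Matrix.diagonal fun i : Fin d => σ (i : ℕ)) * P)
      = ∑ i : Fin d, σ (i : ℕ) ^ 2 * (1 - P i i) := by
    unfold frobSq
    refine Finset.sum_congr rfl fun i _ => ?_
    have hentry : ∀ j : Fin d,
        ((Matrix.diagonal fun i : Fin d => σ (i : ℕ)) -
          (Matrix.diagonal fun i : Fin d => σ (i : ℕ)) * P) i j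
        = σ (i : ℕ) * ((if i = j then (1:ℝ) else 0) - P i j) := by
      intro j
      simp [Matrix.sub_apply, Matrix.diagonal_apply, Matrix.diagonal_mul]
      rcases eq_or_ne i j with h | h
      · simp [h]; ring
      · simp [h]
    calc ∑ j, (((Matrix.diagonal fun i : Fin d => σ (i : ℕ)) -
            (Matrix.diagonal fun i : Fin d => σ (i : ℕ)) * P) i j) ^ 2
        = ∑ j, σ (i : ℕ) ^ 2 *
            ((if i = j then (1:ℝ) else 0) ^ 2 - 2 * (if i = j then (1:ℝ) else 0) * P i j
              + (P i j) ^ 2) := by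
          refine Finset.sum_congr rfl fun j _ => ?_
          rw [hentry j]; ring
      _ = σ (i : ℕ) ^ 2 * (1 - P i i) := by
          rw [← Finset.mul_sum]
          congr 1
          rw [Finset.sum_add_distrib, Finset.sum_sub_distrib, hsq i]
          have h1 : ∑ j : Fin d, (if i = j then (1:ℝ) else 0) ^ 2 = 1 := by
            simp
          have h2 : ∑ j : Fin d, 2 * (if i = j then (1:ℝ) else 0) * P i j
              = 2 * P i i := by
            rw [Finset.sum_congr rfl (fun j _ => by
              rw [show 2 * (if i = j then (1:ℝ) else 0) * P i j
                = (if i = j then 2 * P i j else 0) from by split <;> simp_all])]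
            simp
          rw [h1, h2]; ring
  rw [hL]
  set S := Finset.univ.filter (fun i : Fin d => r ≤ (i : ℕ)) with hS
  set T := Finset.univ.filter (fun i : Fin d => ¬ r ≤ (i : ℕ)) with hT
  have hsplit : ∀ f : Fin d → ℝ, ∑ i : Fin d, f i = ∑ i ∈ S, f i + ∑ i ∈ T, f i := by
    intro f
    rw [hS, hT, Finset.sum_filter_add_sum_filter_not]
  -- trace split
  have htr' : ∑ i ∈ S, P i i + ∑ i ∈ T, P i i = (r : ℝ) := by
    rw [← hsplit]; simpa [Matrix.trace, Matrix.diag] using htr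
  -- card T ≤ r
  have hcard : (T.card : ℝ) ≤ (r : ℝ) := by
    have : T.card ≤ (Finset.range r).card :=
      Finset.card_le_card_of_injOn (fun i => (i : ℕ))
        (fun i hi => by
          have hi' : i ∈ Finset.univ.filter (fun i : Fin d => ¬ r ≤ (i : ℕ)) := hi
          simpa using (Finset.mem_filter.mp hi').2)
        (fun a _ b _ hab => Fin.ext hab)
    simpa using (Nat.cast_le (α := ℝ)).mpr (this.trans_eq (Finset.card_range r))
  -- σ bound
  have hσ0 : ∀ i : Fin d, σ (i : ℕ) ^ 2 ≤ σ 0 ^ 2 := by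
    intro i
    have h := hσdec (Nat.zero_le (i : ℕ))
    nlinarith [hσnonneg (i : ℕ), hσnonneg 0]
  -- key bound on T part
  have hTbound : ∑ i ∈ T, σ (i : ℕ) ^ 2 * (1 - P i i) ≤ σ 0 ^ 2 * ∑ i ∈ S, P i i := by
    have step1 : ∑ i ∈ T, σ (i : ℕ) ^ 2 * (1 - P i i)
        ≤ ∑ i ∈ T, σ 0 ^ 2 * (1 - P i i) := by
      refine Finset.sum_le_sum fun i _ => ?_
      have := hP1 i
      nlinarith [hσ0 i]
    have step2 : ∑ i ∈ T, σ 0 ^ 2 * (1 - P i i)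
        = σ 0 ^ 2 * ((T.card : ℝ) - ∑ i ∈ T, P i i) := by
      rw [← Finset.mul_sum]
      congr 1
      rw [Finset.sum_sub_distrib]
      simp
    have step3 : σ 0 ^ 2 * ((T.card : ℝ) - ∑ i ∈ T, P i i)
        ≤ σ 0 ^ 2 * ∑ i ∈ S, P i i := by
      apply mul_le_mul_of_nonneg_left _ (sq_nonneg _)
      nlinarith [hcard, htr']
    calc ∑ i ∈ T, σ (i : ℕ) ^ 2 * (1 - P i i)
        ≤ ∑ i ∈ T, σ 0 ^ 2 * (1 - P i i) := step1
      _ = σ 0 ^ 2 * ((T.card : ℝ) - ∑ i ∈ T, P i i) := step2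
      _ ≤ σ 0 ^ 2 * ∑ i ∈ S, P i i := step3
  rw [hsplit]
  have hSsplit : ∑ i ∈ S, σ (i : ℕ) ^ 2 * (1 - P i i)
      = ∑ i ∈ S, σ (i : ℕ) ^ 2 - ∑ i ∈ S, σ (i : ℕ) ^ 2 * P i i := by
    rw [← Finset.sum_sub_distrib]
    refine Finset.sum_congr rfl fun i _ => by ring
  have hRHS : ∑ i ∈ S, (σ 0 ^ 2 - σ (i : ℕ) ^ 2) * P i i
      = σ 0 ^ 2 * ∑ i ∈ S, P i i - ∑ i ∈ S, σ (i : ℕ) ^ 2 * P i i := by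
    rw [Finset.mul_sum, ← Finset.sum_sub_distrib]
    refine Finset.sum_congr rfl fun i _ => by ring
  rw [hSsplit, hRHS]
  linarith [hTbound]
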